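/- Let G be a countable discrete group. The following are equivalent: (1) G is amenable; (2) there exists a state τ on ℓ∞(G) such that for every Hilbert space H and every uniformly bounded map φ: G → B(H), there exists a positive definite map ψ: G → B(H) such that ⟨φ(x)* ψ(x) ξ, η⟩ = τ_y ⟨φ(x)* φ(xy) φ(y)* ξ, η⟩ for all x ∈ G and all ξ, η ∈ H (where τ is applied to the bounded function of the variable y). -/

import Mathlib

open scoped ComplexOrder

/-- `f : G → ℂ` is bounded, i.e. `f ∈ ℓ∞(G)`. -/
def IsBddFun {G : Type*} (f : G → ℂ) : Prop := ∃ C : ℝ, ∀ x, ‖f x‖ ≤ C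

/-- A state on `ℓ∞(G)`: a positive unital linear functional, encoded as a functional on
all functions `G → ℂ` whose linearity, positivity and unitality are imposed on bounded
functions. -/
structure LinftyState (G : Type*) where
  toFun : (G → ℂ) → ℂ
  map_add : ∀ f g : G → ℂ, IsBddFun f → IsBddFun g → toFun (f + g) = toFun f + toFun g
  map_smul : ∀ (c : ℂ) (f : G → ℂ), IsBddFun f → toFun (c • f) = c * toFun f
  pos : ∀ f : G → ℂ, IsBddFun f → (∀ x, 0 ≤ f x) → 0 ≤ toFun f
  unital : toFun (fun _ => (1 : ℂ)) = 1

/-- `G` is amenable: there is a left-invariant mean (state) on `ℓ∞(G)`. -/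
def Amenable (G : Type*) [Group G] : Prop :=
  ∃ τ : LinftyState G, ∀ (s : G) (f : G → ℂ), IsBddFun f →
    τ.toFun (fun x => f (s * x)) = τ.toFun f

/-- A map `φ : G → B(H)` is uniformly bounded. -/
def UnifBdd {G H : Type*} [NormedAddCommGroup H] [InnerProductSpace ℂ H]
    (φ : G → H →L[ℂ] H) : Prop := ∃ C : ℝ, ∀ x, ‖φ x‖ ≤ C

/-- A map `ψ : G → B(H)` is positive definite. -/
def PosDefMap {G : Type*} [Group G] {H : Type*} [NormedAddCommGroup H]
    [InnerProductSpace ℂ H] (ψ : G → H →L[ℂ] H) : Prop :=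
  ∀ (n : ℕ) (x : Fin n → G) (ξ : Fin n → H),
    0 ≤ ∑ i, ∑ j, (inner ℂ (ψ ((x i)⁻¹ * x j) (ξ j)) (ξ i) : ℂ)

section AuxHelpers

variable {G : Type*}

lemma isBdd_const (c : ℂ) : IsBddFun (fun _ : G => c) := ⟨‖c‖, fun _ => le_rfl⟩

lemma IsBddFun.add' {f g : G → ℂ} (hf : IsBddFun f) (hg : IsBddFun g) :
    IsBddFun (fun y => f y + g y) := by
  obtain ⟨C, hC⟩ := hf; obtain ⟨D, hD⟩ := hg
  exact ⟨C + D, fun y => (norm_add_le _ _).trans (add_le_add (hC y) (hD y))⟩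

lemma IsBddFun.mul' {f g : G → ℂ} (hf : IsBddFun f) (hg : IsBddFun g) :
    IsBddFun (fun y => f y * g y) := by
  obtain ⟨C, hC⟩ := hf; obtain ⟨D, hD⟩ := hg
  refine ⟨(max C 0) * (max D 0), fun y => ?_⟩
  rw [norm_mul]
  exact mul_le_mul ((hC y).trans (le_max_left _ _)) ((hD y).trans (le_max_left _ _))
    (norm_nonneg _) (le_max_right _ _)

lemma IsBddFun.conj' {f : G → ℂ} (hf : IsBddFun f) :
    IsBddFun (fun y => (starRingEnd ℂ) (f y)) := by
  obtain ⟨C, hC⟩ := hf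
  exact ⟨C, fun y => by simpa using hC y⟩

lemma IsBddFun.comp' {f : G → ℂ} (hf : IsBddFun f) (m : G → G) :
    IsBddFun (fun y => f (m y)) := by
  obtain ⟨C, hC⟩ := hf
  exact ⟨C, fun y => hC (m y)⟩

lemma IsBddFun.neg' {f : G → ℂ} (hf : IsBddFun f) : IsBddFun (fun y => -(f y)) := by
  obtain ⟨C, hC⟩ := hf; exact ⟨C, fun y => by simpa using hC y⟩

variable (τ : LinftyState G)

lemma tau_add (f g : G → ℂ) (hf : IsBddFun f) (hg : IsBddFun g) :
    τ.toFun (fun y => f y + g y) = τ.toFun f + τ.toFun g :=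
  τ.map_add f g hf hg

lemma tau_mul (c : ℂ) (f : G → ℂ) (hf : IsBddFun f) :
    τ.toFun (fun y => c * f y) = c * τ.toFun f := by
  rw [← τ.map_smul c f hf]
  congr 1

lemma tau_const (c : ℂ) : τ.toFun (fun _ : G => c) = c := by
  have h := tau_mul τ c (fun _ => 1) (isBdd_const 1)
  rw [τ.unital, mul_one] at h
  simpa using h

lemma tau_real_bound (g : G → ℂ) (C : ℝ) (him : ∀ x, (g x).im = 0)
    (hb : ∀ x, ‖g x‖ ≤ C) : ∃ r : ℝ, τ.toFun g = (r : ℂ) ∧ |r| ≤ C := by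
  have hbg : IsBddFun g := ⟨C, hb⟩
  have hre : ∀ x, |(g x).re| ≤ C := fun x =>
    (Complex.abs_re_le_norm (g x)).trans (hb x)
  have h1 : 0 ≤ τ.toFun (fun y => g y + (C : ℂ)) := by
    refine τ.pos _ (hbg.add' (isBdd_const _)) (fun x => ?_)
    rw [Complex.le_def]
    refine ⟨?_, by simp [him x]⟩
    simp only [Complex.add_re, Complex.ofReal_re, Complex.zero_re]
    have := abs_le.mp (hre x); linarith
  have h2 : 0 ≤ τ.toFun (fun y => (C : ℂ) + -(g y)) := by
    refine τ.pos _ ((isBdd_const _).add' hbg.neg') (fun x => ?_)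
    rw [Complex.le_def]
    refine ⟨?_, by simp [him x]⟩
    simp only [Complex.add_re, Complex.ofReal_re, Complex.neg_re, Complex.zero_re]
    have := abs_le.mp (hre x); linarith
  have e1 : τ.toFun (fun y => g y + (C : ℂ)) = τ.toFun g + (C : ℂ) := by
    rw [tau_add τ g (fun _ => (C : ℂ)) hbg (isBdd_const _), tau_const]
  have eneg : τ.toFun (fun y => -(g y)) = -τ.toFun g := by
    have := tau_mul τ (-1) g hbg
    simpa using this
  have e2 : τ.toFun (fun y => (C : ℂ) + -(g y)) = (C : ℂ) - τ.toFun g := by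
    rw [tau_add τ (fun _ => (C : ℂ)) (fun y => -(g y)) (isBdd_const _) hbg.neg',
      tau_const, eneg, sub_eq_add_neg]
  rw [e1, Complex.le_def] at h1
  rw [e2, Complex.le_def] at h2
  obtain ⟨h1re, h1im⟩ := h1
  obtain ⟨h2re, h2im⟩ := h2
  refine ⟨(τ.toFun g).re, ?_, ?_⟩
  · apply Complex.ext <;> simp
    simp only [Complex.add_im, Complex.ofReal_im, Complex.zero_im] at h1im
    linarith [h1im.symm]
  · rw [abs_le]
    constructor
    · simp only [Complex.add_re, Complex.ofReal_re, Complex.zero_re] at h1re; linarith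
    · simp only [Complex.sub_re, Complex.ofReal_re, Complex.zero_re] at h2re; linarith

lemma tau_norm_le (f : G → ℂ) (C : ℝ) (hb : ∀ x, ‖f x‖ ≤ C) : ‖τ.toFun f‖ ≤ 2 * C := by
  have hg : ∀ x, ‖((f x).re : ℂ)‖ ≤ C := fun x => by
    rw [Complex.norm_real]
    exact (Complex.abs_re_le_norm (f x)).trans (hb x)
  have hh : ∀ x, ‖((f x).im : ℂ)‖ ≤ C := fun x => by
    rw [Complex.norm_real]
    exact (Complex.abs_im_le_norm (f x)).trans (hb x)
  have hIb : IsBddFun (fun y => Complex.I * ((f y).im : ℂ)) :=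
    (isBdd_const Complex.I).mul' ⟨C, hh⟩
  have hfeq : τ.toFun f = τ.toFun (fun y => ((f y).re : ℂ)) +
      Complex.I * τ.toFun (fun y => ((f y).im : ℂ)) := by
    rw [← tau_mul τ Complex.I _ ⟨C, hh⟩,
      ← tau_add τ (fun y => ((f y).re : ℂ)) (fun y => Complex.I * ((f y).im : ℂ)) ⟨C, hg⟩ hIb]
    congr 1
    funext y
    rw [mul_comm]
    exact (Complex.re_add_im (f y)).symm
  obtain ⟨r1, hr1, hr1le⟩ := tau_real_bound τ (fun y => ((f y).re : ℂ)) C (by simp) hg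
  obtain ⟨r2, hr2, hr2le⟩ := tau_real_bound τ (fun y => ((f y).im : ℂ)) C (by simp) hh
  rw [hfeq, hr1, hr2]
  calc ‖(r1 : ℂ) + Complex.I * (r2 : ℂ)‖ ≤ ‖(r1 : ℂ)‖ + ‖Complex.I * (r2 : ℂ)‖ :=
        norm_add_le _ _
    _ ≤ 2 * C := by
        rw [norm_mul, Complex.norm_I, one_mul, Complex.norm_real, Complex.norm_real,
          Real.norm_eq_abs, Real.norm_eq_abs]
        linarith

lemma isBdd_sum {ι : Type*} (s : Finset ι) (f : ι → G → ℂ)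
    (h : ∀ i ∈ s, IsBddFun (f i)) : IsBddFun (fun y => ∑ i ∈ s, f i y) := by
  classical
  induction s using Finset.induction_on with
  | empty => exact ⟨0, by simp⟩
  | insert a s ha ih =>
    obtain ⟨C1, h1⟩ := h a (Finset.mem_insert_self a s)
    obtain ⟨C2, h2⟩ := ih (fun i hi => h i (Finset.mem_insert_of_mem hi))
    refine ⟨C1 + C2, fun y => ?_⟩
    simp only [Finset.sum_insert ha]
    exact (norm_add_le _ _).trans (add_le_add (h1 y) (h2 y))

lemma tau_sum {ι : Type*} (s : Finset ι) (f : ι → G → ℂ)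
    (h : ∀ i ∈ s, IsBddFun (f i)) :
    τ.toFun (fun y => ∑ i ∈ s, f i y) = ∑ i ∈ s, τ.toFun (f i) := by
  classical
  induction s using Finset.induction_on with
  | empty => simpa using tau_const τ 0
  | insert a s ha ih =>
    rw [Finset.sum_insert ha,
      ← ih (fun i hi => h i (Finset.mem_insert_of_mem hi)),
      ← tau_add τ (f a) (fun y => ∑ i ∈ s, f i y) (h a (Finset.mem_insert_self a s))
        (isBdd_sum s f (fun i hi => h i (Finset.mem_insert_of_mem hi)))]
    congr 1
    funext y
    rw [Finset.sum_insert ha]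

end AuxHelpers

section PsiConstruction

variable {G : Type*} [Group G] {H : Type} [NormedAddCommGroup H] [InnerProductSpace ℂ H]
  [CompleteSpace H]

lemma aux_ptw_bound (φ : G → H →L[ℂ] H) (C : ℝ) (hC : ∀ x, ‖φ x‖ ≤ C) (hC0 : 0 ≤ C)
    (a b : G) (ξ η : H) :
    ‖(inner ℂ (φ a ((ContinuousLinearMap.adjoint (φ b)) ξ)) η : ℂ)‖ ≤ C^2 * ‖ξ‖ * ‖η‖ := by
  calc ‖(inner ℂ (φ a ((ContinuousLinearMap.adjoint (φ b)) ξ)) η : ℂ)‖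
      ≤ ‖φ a ((ContinuousLinearMap.adjoint (φ b)) ξ)‖ * ‖η‖ := norm_inner_le_norm _ _
    _ ≤ (C * (C * ‖ξ‖)) * ‖η‖ := by
        refine mul_le_mul_of_nonneg_right ?_ (norm_nonneg _)
        calc ‖φ a ((ContinuousLinearMap.adjoint (φ b)) ξ)‖
            ≤ ‖φ a‖ * ‖(ContinuousLinearMap.adjoint (φ b)) ξ‖ :=
              (φ a).le_opNorm _
          _ ≤ C * (C * ‖ξ‖) := by
              refine mul_le_mul (hC a) ?_ (norm_nonneg _) hC0
              calc ‖(ContinuousLinearMap.adjoint (φ b)) ξ‖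
                  ≤ ‖ContinuousLinearMap.adjoint (φ b)‖ * ‖ξ‖ :=
                    (ContinuousLinearMap.adjoint (φ b)).le_opNorm _
                _ ≤ C * ‖ξ‖ := by
                    rw [LinearIsometryEquiv.norm_map]
                    exact mul_le_mul_of_nonneg_right (hC b) (norm_nonneg _)
    _ = C^2 * ‖ξ‖ * ‖η‖ := by ring

lemma exists_psi (τ : LinftyState G) (φ : G → H →L[ℂ] H) (C : ℝ)
    (hC : ∀ x, ‖φ x‖ ≤ C) (hC0 : 0 ≤ C) :
    ∃ ψ : G → H →L[ℂ] H, ∀ (x : G) (ξ η : H),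
      (inner ℂ (ψ x ξ) η : ℂ) =
        τ.toFun (fun y => (inner ℂ (φ (x * y) ((ContinuousLinearMap.adjoint (φ y)) ξ)) η : ℂ)) := by
  have hptw := aux_ptw_bound φ C hC hC0
  have hbdd : ∀ (a : G) (ξ η : H), IsBddFun (fun y =>
      (inner ℂ (φ (a * y) ((ContinuousLinearMap.adjoint (φ y)) ξ)) η : ℂ)) :=
    fun a ξ η => ⟨C^2 * ‖ξ‖ * ‖η‖, fun y => hptw (a*y) y ξ η⟩
  let Fl : G → H → (H →L[ℂ] ℂ) := fun x ξ => LinearMap.mkContinuous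
    { toFun := fun η => τ.toFun (fun y =>
        (inner ℂ (φ (x * y) ((ContinuousLinearMap.adjoint (φ y)) ξ)) η : ℂ))
      map_add' := fun η₁ η₂ => by
        rw [← tau_add τ _ _ (hbdd x ξ η₁) (hbdd x ξ η₂)]
        exact congrArg τ.toFun (funext fun y => inner_add_right _ _ _)
      map_smul' := fun c η => by
        rw [RingHom.id_apply, smul_eq_mul, ← tau_mul τ c _ (hbdd x ξ η)]
        exact congrArg τ.toFun (funext fun y => inner_smul_right _ _ _) }
    (2 * (C^2 * ‖ξ‖)) (fun η => by
      refine le_trans (tau_norm_le τ _ (C^2 * ‖ξ‖ * ‖η‖) (fun y => hptw (x*y) y ξ η)) ?_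
      exact le_of_eq (by ring))
  have hK : ∀ (x : G) (ξ η : H),
      (inner ℂ ((InnerProductSpace.toDual ℂ H).symm (Fl x ξ)) η : ℂ) =
        τ.toFun (fun y => (inner ℂ (φ (x * y) ((ContinuousLinearMap.adjoint (φ y)) ξ)) η : ℂ)) :=
    fun x ξ η => InnerProductSpace.toDual_symm_apply
  refine ⟨fun x => LinearMap.mkContinuous
    { toFun := fun ξ => (InnerProductSpace.toDual ℂ H).symm (Fl x ξ)
      map_add' := fun ξ₁ ξ₂ => by
        apply ext_inner_right ℂ
        intro η
        rw [inner_add_left, hK, hK, hK, ← tau_add τ _ _ (hbdd x ξ₁ η) (hbdd x ξ₂ η)]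
        congr 1; funext y
        rw [map_add, map_add, inner_add_left]
      map_smul' := fun c ξ => by
        apply ext_inner_right ℂ
        intro η
        rw [RingHom.id_apply, inner_smul_left, hK, hK,
          ← tau_mul τ ((starRingEnd ℂ) c) _ (hbdd x ξ η)]
        congr 1; funext y
        rw [map_smul, map_smul, inner_smul_left] }
    (2 * C^2) (fun ξ => by
      show ‖(InnerProductSpace.toDual ℂ H).symm (Fl x ξ)‖ ≤ 2 * C^2 * ‖ξ‖
      rw [LinearIsometryEquiv.norm_map]
      refine le_trans (LinearMap.mkContinuous_norm_le _ (by positivity) _) ?_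
      exact le_of_eq (by ring)), fun x ξ η => hK x ξ η⟩

end PsiConstruction

set_option maxHeartbeats 1000000 in
set_option maxRecDepth 8000 in
/-- Theorem 1.1 of the paper. A countable discrete group `G` is amenable
iff there is a state `τ` on `ℓ∞(G)` such that for every Hilbert space `H` and every
uniformly bounded `φ : G → B(H)` there is a positive definite `ψ : G → B(H)` with
`⟨φ(x)* ψ(x) ξ, η⟩ = τ_y ⟨φ(x)* φ(xy) φ(y)* ξ, η⟩` for all `x ∈ G` and `ξ, η ∈ H`. -/
theorem stmt_11 (G : Type*) [Group G] [Countable G] :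
    Amenable G ↔
      ∃ τ : LinftyState G,
        ∀ (H : Type) [NormedAddCommGroup H] [InnerProductSpace ℂ H] [CompleteSpace H],
          ∀ φ : G → H →L[ℂ] H, UnifBdd φ →
            ∃ ψ : G → H →L[ℂ] H, PosDefMap ψ ∧
              ∀ (x : G) (ξ η : H),
                (inner ℂ (((ContinuousLinearMap.adjoint (φ x)).comp (ψ x)) ξ) η : ℂ) =
                  τ.toFun (fun y =>
                    (inner ℂ (((ContinuousLinearMap.adjoint (φ x)).comp
                      ((φ (x * y)).comp (ContinuousLinearMap.adjoint (φ y)))) ξ) η : ℂ)) := by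
  constructor
  · rintro ⟨τ, hinv⟩
    refine ⟨τ, ?_⟩
    intro H _ _ _ φ hφ
    obtain ⟨C0, hC0⟩ := hφ
    have hC : ∀ x, ‖φ x‖ ≤ max C0 0 := fun x => (hC0 x).trans (le_max_left _ _)
    set C := max C0 0 with hCdef
    have hC0' : (0:ℝ) ≤ C := le_max_right _ _
    have hptw := aux_ptw_bound φ C hC hC0'
    obtain ⟨ψ, hK⟩ := exists_psi τ φ C hC hC0'
    refine ⟨ψ, ?_, ?_⟩
    · -- positive definiteness
      intro n x ξ
      classical
      set g : Fin n → Fin n → G → ℂ := fun i j y =>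
        (inner ℂ (φ ((x i)⁻¹ * y) ((ContinuousLinearMap.adjoint (φ ((x j)⁻¹ * y))) (ξ j)))
          (ξ i) : ℂ) with hgdef
      have hgb : ∀ i j, IsBddFun (g i j) := fun i j =>
        ⟨C^2 * ‖ξ j‖ * ‖ξ i‖, fun y => hptw ((x i)⁻¹ * y) ((x j)⁻¹ * y) (ξ j) (ξ i)⟩
      have h2 : ∀ i j, (inner ℂ (ψ ((x i)⁻¹ * x j) (ξ j)) (ξ i) : ℂ) = τ.toFun (g i j) := by
        intro i j
        rw [hK, ← hinv (x j) (g i j) (hgb i j)]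
        congr 1
        funext y
        simp only [hgdef, inv_mul_cancel_left, mul_assoc]
      have e1 : ∑ i, ∑ j, (inner ℂ (ψ ((x i)⁻¹ * x j) (ξ j)) (ξ i) : ℂ) =
          τ.toFun (fun y => ∑ i, ∑ j, g i j y) := by
        rw [tau_sum τ Finset.univ (fun i y => ∑ j, g i j y)
          (fun i _ => isBdd_sum Finset.univ (g i) (fun j _ => hgb i j))]
        refine Finset.sum_congr rfl fun i _ => ?_
        rw [tau_sum τ Finset.univ (g i) (fun j _ => hgb i j)]
        exact Finset.sum_congr rfl fun j _ => h2 i j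
      rw [e1]
      refine τ.pos _ (isBdd_sum Finset.univ _
        (fun i _ => isBdd_sum Finset.univ (g i) (fun j _ => hgb i j))) (fun y => ?_)
      have hz : ∑ i, ∑ j, g i j y =
          (inner ℂ (∑ i, (ContinuousLinearMap.adjoint (φ ((x i)⁻¹ * y))) (ξ i))
            (∑ i, (ContinuousLinearMap.adjoint (φ ((x i)⁻¹ * y))) (ξ i)) : ℂ) := by
        rw [inner_sum]
        refine Finset.sum_congr rfl fun i _ => ?_
        rw [sum_inner]
        refine Finset.sum_congr rfl fun j _ => ?_
        simp only [hgdef]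
        rw [← ContinuousLinearMap.adjoint_inner_right]
      rw [hz, inner_self_eq_norm_sq_to_K, ← RCLike.ofReal_pow]
      exact RCLike.ofReal_nonneg.mpr (sq_nonneg _)
    · -- the averaging identity
      intro x ξ η
      simp only [ContinuousLinearMap.comp_apply]
      rw [ContinuousLinearMap.adjoint_inner_left, hK]
      congr 1
      funext y
      rw [ContinuousLinearMap.adjoint_inner_left]
  · rintro ⟨τ, hτ⟩
    refine ⟨τ, ?_⟩
    -- Step 1: the key identity obtained from scalar uniformly bounded maps
    have key : ∀ (c : G → ℂ), IsBddFun c → (∀ x, c x ≠ 0) → ∀ s : G,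
        τ.toFun (fun y => (starRingEnd ℂ) (c (s * y)) * c y) =
          (starRingEnd ℂ) (τ.toFun (fun y => (starRingEnd ℂ) (c (s⁻¹ * y)) * c y)) := by
      intro c hc hcne s
      obtain ⟨Cc0, hCc0⟩ := hc
      have hCc : ∀ x, ‖c x‖ ≤ max Cc0 0 := fun x => (hCc0 x).trans (le_max_left _ _)
      have hcb : IsBddFun c := ⟨max Cc0 0, hCc⟩
      have hbm : ∀ (m : G → G), IsBddFun (fun y => (starRingEnd ℂ) (c (m y)) * c y) :=
        fun m => ((hcb.comp' m).conj').mul' hcb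
      obtain ⟨ψ, hpd, heq⟩ := hτ ℂ (fun x => c x • ContinuousLinearMap.id ℂ ℂ)
        ⟨max Cc0 0, fun x => by
          calc ‖c x • ContinuousLinearMap.id ℂ ℂ‖
              ≤ ‖c x‖ * ‖ContinuousLinearMap.id ℂ ℂ‖ :=
                ContinuousLinearMap.opNorm_smul_le _ _
            _ ≤ max Cc0 0 := by
                rw [ContinuousLinearMap.norm_id, mul_one]; exact hCc x⟩
      have hadj : ∀ a : ℂ, ContinuousLinearMap.adjoint (a • ContinuousLinearMap.id ℂ ℂ)
          = (starRingEnd ℂ) a • ContinuousLinearMap.id ℂ ℂ := fun a => by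
        rw [map_smulₛₗ, ContinuousLinearMap.adjoint_id]
      have hψ : ∀ (g : G) (b : ℂ), ψ g b = b * ψ g 1 := fun g b => by
        simpa using map_smul (ψ g) b (1:ℂ)
      have hu : ∀ x : G, (starRingEnd ℂ) (ψ x 1) =
          τ.toFun (fun y => (starRingEnd ℂ) (c (x * y)) * c y) := by
        intro x
        have h := heq x 1 1
        simp only [ContinuousLinearMap.comp_apply, hadj, ContinuousLinearMap.smul_apply,
          ContinuousLinearMap.id_apply, RCLike.inner_apply, map_mul, Complex.conj_conj,
          mul_one, smul_eq_mul, map_one, one_mul] at h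
        rw [tau_mul τ (c x) _ (hbm (fun y => x * y))] at h
        exact mul_left_cancel₀ (hcne x) h
      have hψI : ∀ g : G, ψ g Complex.I = Complex.I * ψ g 1 := fun g => hψ g Complex.I
      have hherm : ∀ t : G, ψ t⁻¹ 1 = (starRingEnd ℂ) (ψ t 1) := by
        intro t
        have h0 := hpd 1 ![1] ![1]
        have h1 := hpd 2 ![1, t] ![1, 1]
        have h2 := hpd 2 ![1, t] ![1, Complex.I]
        simp only [Fin.sum_univ_one, Fin.sum_univ_two, Matrix.cons_val_zero,
          Matrix.cons_val_one, Matrix.head_cons, RCLike.inner_apply, inv_one, one_mul,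
          mul_one, inv_mul_cancel, hψI, map_mul, Complex.conj_I, map_one] at h0 h1 h2
        rw [Complex.le_def] at h0 h1 h2
        obtain ⟨-, h0im⟩ := h0
        obtain ⟨-, h1im⟩ := h1
        obtain ⟨-, h2im⟩ := h2
        simp only [Complex.zero_im, Complex.add_im, Complex.add_re, Complex.mul_im,
          Complex.mul_re, Complex.I_re, Complex.I_im, Complex.neg_re, Complex.neg_im,
          Complex.conj_re, Complex.conj_im] at h0im h1im h2im
        apply Complex.ext
        · simp only [Complex.conj_re]
          linarith
        · simp only [Complex.conj_im]
          linarith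
      have e1 := hu s
      have e2 := hu s⁻¹
      rw [← e1, ← e2, Complex.conj_conj, hherm s]
    -- Step 2: τ conjugate-shift identity for all bounded functions
    have main : ∀ (s : G) (f : G → ℂ), IsBddFun f →
        τ.toFun (fun y => (starRingEnd ℂ) (f (s * y))) = (starRingEnd ℂ) (τ.toFun f) := by
      have hG : ∀ (s : G) (f : G → ℂ), IsBddFun f →
          τ.toFun f + τ.toFun (fun y => (starRingEnd ℂ) (f (s * y))) =
            (starRingEnd ℂ) (τ.toFun f) +
              (starRingEnd ℂ) (τ.toFun (fun y => (starRingEnd ℂ) (f (s⁻¹ * y)))) := by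
        intro s f hf
        have hbad : {t : ℝ | ∃ x, f x + (t:ℂ) = 0}.Countable := by
          have hsub : {t : ℝ | ∃ x, f x + (t:ℂ) = 0} ⊆
              Set.range (fun x : G => (-(f x)).re) := by
            rintro t ⟨x, hx⟩
            refine ⟨x, ?_⟩
            have ht : (t:ℂ) = -(f x) := by linear_combination hx
            show (-(f x)).re = t
            rw [← ht, Complex.ofReal_re]
          exact (Set.countable_range _).mono hsub
        have hex : ∀ (A : Set ℝ), A.Countable → ∃ t, t ∉ A := by
          intro A hA
          by_contra h
          push_neg at h
          exact Cardinal.not_countable_real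
            (by rwa [Set.eq_univ_of_forall h] at hA)
        obtain ⟨t1, ht1⟩ := hex _ hbad
        obtain ⟨t2, ht2'⟩ := hex _ (hbad.union (Set.countable_singleton t1))
        have ht2 : t2 ∉ {t : ℝ | ∃ x, f x + (t:ℂ) = 0} := fun h => ht2' (Or.inl h)
        have hne : t2 ≠ t1 := fun h => ht2' (Or.inr h)
        have hnv : ∀ t : ℝ, t ∉ {t : ℝ | ∃ x, f x + (t:ℂ) = 0} →
            ∀ x, f x + (t:ℂ) ≠ 0 := fun t ht x hx => ht ⟨x, hx⟩
        have hexp : ∀ (r : G) (t : ℝ),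
            τ.toFun (fun y => (starRingEnd ℂ) (f (r * y) + (t:ℂ)) * (f y + (t:ℂ))) =
              τ.toFun (fun y => (starRingEnd ℂ) (f (r * y)) * f y) + (t:ℂ) * τ.toFun f +
                (t:ℂ) * τ.toFun (fun y => (starRingEnd ℂ) (f (r * y))) + (t:ℂ) * (t:ℂ) := by
          intro r t
          have hb1 : IsBddFun (fun y => (starRingEnd ℂ) (f (r * y)) * f y) :=
            ((hf.comp' (fun y => r * y)).conj').mul' hf
          have hb2 : IsBddFun (fun y => (t:ℂ) * f y) := (isBdd_const _).mul' hf
          have hb3 : IsBddFun (fun y => (t:ℂ) * (starRingEnd ℂ) (f (r * y))) :=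
            (isBdd_const _).mul' ((hf.comp' (fun y => r * y)).conj')
          have efun : (fun y => (starRingEnd ℂ) (f (r * y) + (t:ℂ)) * (f y + (t:ℂ))) =
              fun y => (((starRingEnd ℂ) (f (r * y)) * f y) + ((t:ℂ) * f y)) +
                (((t:ℂ) * (starRingEnd ℂ) (f (r * y))) + ((t:ℂ) * (t:ℂ))) := by
            funext y
            rw [map_add, Complex.conj_ofReal]
            ring
          rw [efun, tau_add τ _ _ (hb1.add' hb2) (hb3.add' (isBdd_const _)),
            tau_add τ _ _ hb1 hb2, tau_add τ _ _ hb3 (isBdd_const _),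
            tau_mul τ _ _ hf, tau_mul τ _ _ ((hf.comp' (fun y => r * y)).conj'),
            tau_const]
          ring
        have hkey' : ∀ t : ℝ, (∀ x, f x + (t:ℂ) ≠ 0) →
            τ.toFun (fun y => (starRingEnd ℂ) (f (s * y)) * f y) + (t:ℂ) * τ.toFun f +
              (t:ℂ) * τ.toFun (fun y => (starRingEnd ℂ) (f (s * y))) + (t:ℂ) * (t:ℂ) =
            (starRingEnd ℂ) (τ.toFun (fun y => (starRingEnd ℂ) (f (s⁻¹ * y)) * f y)) +
              (t:ℂ) * (starRingEnd ℂ) (τ.toFun f) +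
              (t:ℂ) * (starRingEnd ℂ)
                (τ.toFun (fun y => (starRingEnd ℂ) (f (s⁻¹ * y)))) + (t:ℂ) * (t:ℂ) := by
          intro t ht
          have hk := key (fun z => f z + (t:ℂ)) (hf.add' (isBdd_const _)) ht s
          rw [hexp s t, hexp s⁻¹ t] at hk
          simp only [map_add, map_mul, Complex.conj_ofReal] at hk
          linear_combination hk
        have E1 := hkey' t1 (hnv t1 ht1)
        have E2 := hkey' t2 (hnv t2 ht2)
        have htne : t1 ≠ t2 := fun h => hne h.symm
        have hne' : ((t1:ℂ) - (t2:ℂ)) ≠ 0 := sub_ne_zero.mpr (by exact_mod_cast htne)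
        have h12 : ((t1:ℂ) - (t2:ℂ)) *
            (τ.toFun f + τ.toFun (fun y => (starRingEnd ℂ) (f (s * y)))) =
            ((t1:ℂ) - (t2:ℂ)) * ((starRingEnd ℂ) (τ.toFun f) +
              (starRingEnd ℂ) (τ.toFun (fun y => (starRingEnd ℂ) (f (s⁻¹ * y))))) := by
          linear_combination E1 - E2
        exact mul_left_cancel₀ hne' h12
      intro s f hf
      have G1 := hG s f hf
      have G2 := hG s (fun y => Complex.I * f y) ((isBdd_const _).mul' hf)
      have r1 : τ.toFun (fun y => Complex.I * f y) = Complex.I * τ.toFun f :=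
        tau_mul τ _ _ hf
      have r2 : τ.toFun (fun y => (starRingEnd ℂ) (Complex.I * f (s * y))) =
          (-Complex.I) * τ.toFun (fun y => (starRingEnd ℂ) (f (s * y))) := by
        rw [← tau_mul τ (-Complex.I) _ ((hf.comp' (fun y => s * y)).conj')]
        congr 1
        funext y
        rw [map_mul, Complex.conj_I, neg_mul]
      have r3 : τ.toFun (fun y => (starRingEnd ℂ) (Complex.I * f (s⁻¹ * y))) =
          (-Complex.I) * τ.toFun (fun y => (starRingEnd ℂ) (f (s⁻¹ * y))) := by
        rw [← tau_mul τ (-Complex.I) _ ((hf.comp' (fun y => s⁻¹ * y)).conj')]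
        congr 1
        funext y
        rw [map_mul, Complex.conj_I, neg_mul]
      rw [r1, r2, r3] at G2
      simp only [map_mul, Complex.conj_I, map_neg] at G2
      linear_combination (1/2 : ℂ) * G1 + (Complex.I/2) * G2 +
        (-(τ.toFun f - τ.toFun (fun y => (starRingEnd ℂ) (f (s * y))) +
          (starRingEnd ℂ) (τ.toFun f) -
          (starRingEnd ℂ) (τ.toFun (fun y => (starRingEnd ℂ) (f (s⁻¹ * y)))))/2) * Complex.I_sq
    -- Step 3: conclude left invariance
    intro s f hf
    have h1 := main s (fun y => (starRingEnd ℂ) (f y)) hf.conj'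
    have h2 := main 1 (fun y => (starRingEnd ℂ) (f y)) hf.conj'
    simp only [Complex.conj_conj] at h1 h2
    rw [h1, ← h2]
    congr 1
    funext y
    rw [one_mul]
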